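/- Let A be a symmetric m×m real matrix with nonnegative entries, p ∈ ℝ^m a probability vector (pᵢ ≥ 0, ∑ᵢ pᵢ = 1), P = diag(p₁,…,p_m), and let t ≥ 0 satisfy t·‖AP‖₂ < 1, where ‖·‖₂ is the operator norm induced by the Euclidean norm. If s ∈ [0,1]^m satisfies s_i = exp( t ∑_{l=1}^m A_{il} p_l (s_l − 1) ) for every i ∈ [m], then s_i = 1 for every i. In other words, in the subcritical regime t < ‖AP‖₂⁻¹ the only fixed point of the offspring generating map in the cube [0,1]^m is the all-ones vector. -/

import Mathlib

/-- The operator norm of an `m × m` real matrix induced by the Euclidean norm. -/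
noncomputable def euclideanOpNorm {m : ℕ} (M : Matrix (Fin m) (Fin m) ℝ) : ℝ :=
  ‖(Matrix.toEuclideanCLM (𝕜 := ℝ) M : EuclideanSpace ℝ (Fin m) →L[ℝ] EuclideanSpace ℝ (Fin m))‖

/-- In the subcritical regime `t‖AP‖₂ < 1`, the only fixed point in `[0,1]^m`
of the offspring generating map `s ↦ (exp(t ∑_l A_{il} p_l (s_l - 1)))_i` of the multi-type
branching process with Poisson offspring is the all-ones vector. -/
theorem subcritical_unique_fixed_point
    (m : ℕ) (hm : 1 ≤ m)
    (A : Matrix (Fin m) (Fin m) ℝ) (hAsymm : A.IsSymm) (hA0 : ∀ i j, 0 ≤ A i j)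
    (p : Fin m → ℝ) (hp0 : ∀ i, 0 ≤ p i) (hp1 : ∑ i, p i = 1)
    (t : ℝ) (ht : 0 ≤ t)
    (hsub : t * euclideanOpNorm (A * Matrix.diagonal p) < 1)
    (s : Fin m → ℝ) (hs : ∀ i, s i ∈ Set.Icc (0:ℝ) 1)
    (hfix : ∀ i, s i = Real.exp (t * ∑ l, A i l * p l * (s l - 1))) :
    ∀ i, s i = 1 := by
  set M : Matrix (Fin m) (Fin m) ℝ := A * Matrix.diagonal p with hM
  set x : Fin m → ℝ := fun i => 1 - s i with hx
  have hx0 : ∀ i, 0 ≤ x i := fun i => by simp [hx]; exact (hs i).2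
  -- key pointwise inequality: x i ≤ t * (M.mulVec x) i
  have hkey : ∀ i, x i ≤ t * (M.mulVec x) i := by
    intro i
    have h1 : 1 + t * ∑ l, A i l * p l * (s l - 1) ≤ s i := by
      rw [hfix i]
      linarith [Real.add_one_le_exp (t * ∑ l, A i l * p l * (s l - 1))]
    have h2 : (M.mulVec x) i = -∑ l, A i l * p l * (s l - 1) := by
      simp only [Matrix.mulVec, dotProduct, hM, Matrix.mul_diagonal,
        ← Finset.sum_neg_distrib]
      apply Finset.sum_congr rfl
      intro l _
      simp [hx]; ring
    rw [h2]
    have hxi : x i = 1 - s i := rfl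
    linarith
  -- Mx is nonneg
  have hMx0 : ∀ i, 0 ≤ (M.mulVec x) i := by
    intro i
    simp only [Matrix.mulVec, dotProduct]
    apply Finset.sum_nonneg
    intro l _
    exact mul_nonneg (by simp [hM, Matrix.mul_diagonal]; exact mul_nonneg (hA0 i l) (hp0 l)) (hx0 l)
  -- Consider x as element of EuclideanSpace
  set v : EuclideanSpace ℝ (Fin m) := (WithLp.equiv 2 (Fin m → ℝ)).symm x with hv
  have hnorm1 : ‖v‖ ≤ t * ‖Matrix.toEuclideanCLM (𝕜 := ℝ) M v‖ := by
    have hMv : Matrix.toEuclideanCLM (𝕜 := ℝ) M v =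
        (WithLp.equiv 2 (Fin m → ℝ)).symm (M.mulVec x) := by
      rw [hv]; rfl
    rw [hMv]
    rw [EuclideanSpace.norm_eq, EuclideanSpace.norm_eq]
    rw [← Real.sqrt_sq (by positivity : (0:ℝ) ≤ t), ← Real.sqrt_mul (by positivity)]
    apply Real.sqrt_le_sqrt
    rw [Finset.mul_sum]
    apply Finset.sum_le_sum
    intro i _
    have : |x i| ≤ t * |(M.mulVec x) i| := by
      rw [abs_of_nonneg (hx0 i), abs_of_nonneg (hMx0 i)]
      exact hkey i
    calc ‖(WithLp.equiv 2 (Fin m → ℝ)).symm x i‖ ^ 2 = |x i| ^ 2 := by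
          simp [Real.norm_eq_abs]
      _ ≤ (t * |(M.mulVec x) i|) ^ 2 := by
          apply sq_le_sq' _ this; linarith [abs_nonneg (x i), this]
      _ = t ^ 2 * ‖(WithLp.equiv 2 (Fin m → ℝ)).symm (M.mulVec x) i‖ ^ 2 := by
          rw [mul_pow]; simp [Real.norm_eq_abs]
  have hnorm2 : ‖Matrix.toEuclideanCLM (𝕜 := ℝ) M v‖ ≤ euclideanOpNorm M * ‖v‖ :=
    (Matrix.toEuclideanCLM (𝕜 := ℝ) M).le_opNorm v
  have hv0 : ‖v‖ = 0 := by
    by_contra h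
    have hvpos : 0 < ‖v‖ := lt_of_le_of_ne (norm_nonneg v) (Ne.symm h)
    have : ‖v‖ ≤ t * (euclideanOpNorm M * ‖v‖) :=
      hnorm1.trans (by nlinarith)
    nlinarith
  have hveq : v = 0 := norm_eq_zero.mp hv0
  intro i
  have : x i = 0 := by
    have := congrFun (congrArg (WithLp.equiv 2 (Fin m → ℝ)) hveq) i
    simpa [hv] using this
  simp [hx] at this
  linarith
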